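/- For every integer n ≥ 1, the polynomial 1 - 8t + 8t^{n+1} - t^{n+2} has a unique real root r_n in the open interval (0,1), and the sequence 1/r_n is strictly increasing in n and converges to 8 as n → ∞. -/

import Mathlib

open Filter

open Finset in
noncomputable def gg (n : ℕ) (t : ℝ) : ℝ :=
  1 + t ^ (n + 1) - 7 * ∑ k ∈ Finset.range n, t ^ (k + 1)

lemma gg_factor (n : ℕ) (t : ℝ) :
    (1 - t) * gg n t = 1 - 8 * t + 8 * t ^ (n + 1) - t ^ (n + 2) := by
  have h := geom_sum_mul t n
  have key : (∑ k ∈ Finset.range n, t ^ (k + 1)) = t * ∑ k ∈ Finset.range n, t ^ k := by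
    rw [Finset.mul_sum]; exact Finset.sum_congr rfl fun k _ => by ring
  unfold gg
  rw [key]
  linear_combination (7 * t) * h

lemma gg_cont (n : ℕ) : Continuous (gg n) := by
  unfold gg
  exact (continuous_const.add (continuous_pow _)).sub
    (continuous_const.mul (continuous_finset_sum _ fun k _ => continuous_pow _))

lemma gg_hasDeriv (n : ℕ) (t : ℝ) :
    HasDerivAt (gg n) (((n : ℝ) + 1) * t ^ n - 7 * ∑ k ∈ Finset.range n, ((k : ℝ) + 1) * t ^ k) t := by
  have h1 : HasDerivAt (fun t : ℝ => t ^ (n + 1)) (((n : ℝ) + 1) * t ^ n) t := by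
    simpa using hasDerivAt_pow (n + 1) t
  have h2 : HasDerivAt (fun t : ℝ => ∑ k ∈ Finset.range n, t ^ (k + 1))
      (∑ k ∈ Finset.range n, ((k : ℝ) + 1) * t ^ k) t := by
    apply HasDerivAt.fun_sum
    intro k _
    simpa using hasDerivAt_pow (k + 1) t
  unfold gg; simpa using ((hasDerivAt_const t (1:ℝ)).fun_add h1).fun_sub (h2.const_mul 7)

lemma gg_anti (n : ℕ) (hn : 1 ≤ n) : StrictAntiOn (gg n) (Set.Icc 0 1) := by
  apply strictAntiOn_of_deriv_neg (convex_Icc 0 1) (gg_cont n).continuousOn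
  intro t ht
  rw [interior_Icc] at ht
  obtain ⟨ht0, ht1⟩ := ht
  rw [(gg_hasDeriv n t).deriv]
  have hsum : (n : ℝ) * t ^ n ≤ ∑ k ∈ Finset.range n, ((k : ℝ) + 1) * t ^ k := by
    have hmem : n - 1 ∈ Finset.range n := by
      simp [Nat.sub_lt hn]
    have hterm : (n : ℝ) * t ^ n ≤ (((n - 1 : ℕ) : ℝ) + 1) * t ^ (n - 1) := by
      have hc : ((n - 1 : ℕ) : ℝ) + 1 = (n : ℝ) := by
        have : (n - 1) + 1 = n := Nat.succ_pred_eq_of_pos hn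
        exact_mod_cast congrArg (Nat.cast : ℕ → ℝ) this
      rw [hc]
      apply mul_le_mul_of_nonneg_left _ (by positivity)
      exact pow_le_pow_of_le_one ht0.le ht1.le (Nat.sub_le n 1)
    have hs := Finset.single_le_sum (f := fun k : ℕ => ((k : ℝ) + 1) * t ^ k)
      (fun k _ => by positivity) hmem
    exact hterm.trans hs
  have hp : (0 : ℝ) < t ^ n := by positivity
  have hn1 : (1 : ℝ) ≤ (n : ℝ) := by exact_mod_cast hn
  nlinarith [hsum, hp, hn1]

lemma gg_exists (n : ℕ) (hn : 1 ≤ n) : ∃ r ∈ Set.Ioo (0 : ℝ) 1, gg n r = 0 := by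
  have h0 : gg n 0 = 1 := by simp [gg]
  have h1 : gg n 1 = 2 - 7 * n := by simp [gg]; ring
  have hsub := intermediate_value_Ioo' (le_of_lt one_pos : (0:ℝ) ≤ 1) (gg_cont n).continuousOn
  have hmem : (0 : ℝ) ∈ Set.Ioo (gg n 1) (gg n 0) := by
    rw [h0, h1]
    constructor
    · have : (1 : ℝ) ≤ (n : ℝ) := by exact_mod_cast hn
      linarith
    · norm_num
  obtain ⟨r, hr, hgr⟩ := hsub hmem
  exact ⟨r, hr, hgr⟩ 

-- root of f in Ioo iff root of gg
lemma gg_of_f {n : ℕ} {t : ℝ} (ht : t ∈ Set.Ioo (0 : ℝ) 1)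
    (hf : 1 - 8 * t + 8 * t ^ (n + 1) - t ^ (n + 2) = 0) : gg n t = 0 := by
  have h := gg_factor n t
  rw [hf] at h
  rcases mul_eq_zero.1 h with h1 | h1
  · exfalso; linarith [ht.2]
  · exact h1

lemma gg_step (n : ℕ) (t : ℝ) :
    gg (n + 1) t = gg n t + t ^ (n + 2) - 8 * t ^ (n + 1) := by
  unfold gg
  rw [Finset.sum_range_succ]
  ring

lemma gg_eighth_pos (n : ℕ) : 0 < gg n (1 / 8 : ℝ) := by
  have hf : (1 : ℝ) - 8 * (1/8) + 8 * (1/8 : ℝ) ^ (n + 1) - (1/8 : ℝ) ^ (n + 2) > 0 := by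
    have h1 : (0 : ℝ) < (1/8 : ℝ) ^ (n + 1) := by positivity
    have h2 : ((1/8 : ℝ)) ^ (n + 2) = (1/8 : ℝ) ^ (n + 1) * (1/8) := by ring
    rw [h2]; nlinarith
  have h := gg_factor n (1/8 : ℝ)
  nlinarith [h, hf]

-- any root of gg n in Ioo 0 1 exceeds 1/8
lemma root_gt {n : ℕ} (hn : 1 ≤ n) {t : ℝ} (ht : t ∈ Set.Ioo (0 : ℝ) 1)
    (hg : gg n t = 0) : 1 / 8 < t := by
  by_contra hle
  push_neg at hle
  have h8 : (1/8 : ℝ) ∈ Set.Icc (0:ℝ) 1 := by norm_num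
  have htI : t ∈ Set.Icc (0:ℝ) 1 := ⟨ht.1.le, ht.2.le⟩
  rcases lt_or_eq_of_le hle with h | h
  · have := gg_anti n hn htI h8 h
    linarith [gg_eighth_pos n, this, hg]
  · rw [h] at hg
    linarith [gg_eighth_pos n, hg]

/-- For every `n ≥ 1`, the polynomial `1 - 8t + 8t^{n+1} - t^{n+2}` has a unique real
root `r_n` in `(0,1)`; for any choice `r` of these roots, the sequence `1/r_n` is
strictly increasing in `n` and converges to `8`. -/
theorem stmt_2 :
    (∀ n : ℕ, 1 ≤ n →
      ∃! r : ℝ, r ∈ Set.Ioo (0 : ℝ) 1 ∧ 1 - 8 * r + 8 * r ^ (n + 1) - r ^ (n + 2) = 0) ∧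
    (∀ r : ℕ → ℝ,
      (∀ n : ℕ, 1 ≤ n →
        r n ∈ Set.Ioo (0 : ℝ) 1 ∧ 1 - 8 * r n + 8 * (r n) ^ (n + 1) - (r n) ^ (n + 2) = 0) →
      (∀ m n : ℕ, 1 ≤ m → m < n → 1 / r m < 1 / r n) ∧
      Tendsto (fun n => 1 / r n) atTop (nhds 8)) := by
  constructor
  · intro n hn
    obtain ⟨r, hr, hgr⟩ := gg_exists n hn
    refine ⟨r, ⟨hr, ?_⟩, ?_⟩
    · rw [← gg_factor n r, hgr, mul_zero]
    · rintro s ⟨hs, hfs⟩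
      exact (gg_anti n hn).injOn (Set.Ioo_subset_Icc_self hs) (Set.Ioo_subset_Icc_self hr)
        ((gg_of_f hs hfs).trans hgr.symm)
  · intro r hr
    -- gg roots
    have hg : ∀ n : ℕ, 1 ≤ n → gg n (r n) = 0 := fun n hn =>
      gg_of_f (hr n hn).1 (hr n hn).2
    have hIoo : ∀ n : ℕ, 1 ≤ n → r n ∈ Set.Ioo (0:ℝ) 1 := fun n hn => (hr n hn).1
    -- step: r (n+1) < r n
    have hstep : ∀ n : ℕ, 1 ≤ n → r (n + 1) < r n := by
      intro n hn
      have h1 : gg (n + 1) (r n) < 0 := by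
        rw [gg_step, hg n hn]
        have h0 := (hIoo n hn).1
        have h1 := (hIoo n hn).2
        have hp : (0:ℝ) < (r n) ^ (n + 1) := by positivity
        have he : (r n) ^ (n + 2) = (r n) ^ (n + 1) * r n := by ring
        rw [he]; nlinarith
      have h2 : gg (n + 1) (r (n + 1)) = 0 := hg (n + 1) (by omega)
      by_contra hle
      push_neg at hle
      rcases lt_or_eq_of_le hle with h | h
      · have := gg_anti (n + 1) (by omega) (Set.Ioo_subset_Icc_self (hIoo n hn))
          (Set.Ioo_subset_Icc_self (hIoo (n + 1) (by omega))) h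
        linarith
      · rw [← h] at h2; linarith
    -- chain: m < n → r n < r m
    have hchain : ∀ m n : ℕ, 1 ≤ m → m < n → r n < r m := by
      intro m n hm hmn
      induction n, hmn using Nat.le_induction with
      | base => exact hstep m hm
      | succ n hn ih => exact (hstep n (by omega)).trans ih
    refine ⟨fun m n hm hmn => one_div_lt_one_div_of_lt (hIoo n (by omega)).1 (hchain m n hm hmn), ?_⟩
    -- limit
    have hub : ∀ n : ℕ, 1 ≤ n → r n ≤ 1 / 8 + (r 1) ^ (n + 1) := by
      intro n hn
      have hf := (hr n hn).2
      have hle1 : r n ≤ r 1 := by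
        rcases eq_or_lt_of_le hn with h | h
        · rw [← h]
        · exact (hchain 1 n le_rfl h).le
      have hrn0 := (hIoo n hn).1
      have hpow : (r n) ^ (n + 1) ≤ (r 1) ^ (n + 1) :=
        pow_le_pow_left₀ hrn0.le hle1 (n + 1)
      have hp2 : (0:ℝ) ≤ (r n) ^ (n + 2) := by positivity
      linarith
    have hlb : ∀ n : ℕ, 1 ≤ n → 1 / 8 < r n := fun n hn =>
      root_gt hn (hIoo n hn) (hg n hn)
    have hr1 : r 1 ∈ Set.Ioo (0:ℝ) 1 := hIoo 1 le_rfl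
    have htend : Tendsto r atTop (nhds (1/8 : ℝ)) := by
      have hpow : Tendsto (fun n : ℕ => (r 1) ^ (n + 1)) atTop (nhds 0) :=
        (tendsto_pow_atTop_nhds_zero_of_lt_one hr1.1.le hr1.2).comp (tendsto_add_atTop_nat 1)
      have hup : Tendsto (fun n : ℕ => 1/8 + (r 1) ^ (n + 1)) atTop (nhds (1/8 : ℝ)) := by
        simpa using (tendsto_const_nhds.add hpow)
      apply tendsto_of_tendsto_of_tendsto_of_le_of_le' tendsto_const_nhds hup
      · filter_upwards [eventually_ge_atTop 1] with n hn
        exact (hlb n hn).le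
      · filter_upwards [eventually_ge_atTop 1] with n hn
        exact hub n hn
    have : Tendsto (fun n => (r n)⁻¹) atTop (nhds ((1/8 : ℝ)⁻¹)) :=
      htend.inv₀ (by norm_num)
    simpa [one_div] using this
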